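/- Let R̄ be a commutative ring of characteristic p and S̄ a commutative R̄-algebra which is free as an R̄-module with basis (s_i)_{i∈I}. Then the following are equivalent: (1) S̄ is relatively perfect over R̄ (the relative Frobenius is an isomorphism); (2) for every l ∈ ℕ, the family (s_i^{p^l})_{i∈I} is an R̄-basis of S̄; (3) the family (s_i^p)_{i∈I} is an R̄-basis of S̄. -/

import Mathlib

/-- `R` viewed as an `R`-module through the Frobenius endomorphism `a ↦ aᵖ`. -/
def FrobTwist (p : ℕ) (R : Type*) : Type _ := R

/-- The identity of `R`, viewed as a map `FrobTwist p R → R`. -/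
def FrobTwist.val {p : ℕ} {R : Type*} (x : FrobTwist p R) : R := x

instance (p : ℕ) (R : Type*) [CommRing R] : AddCommGroup (FrobTwist p R) :=
  inferInstanceAs (AddCommGroup R)

noncomputable instance (p : ℕ) [Fact p.Prime] (R : Type*) [CommRing R] [CharP R p] :
    Module R (FrobTwist p R) :=
  Module.compHom (R := R) R (frobenius R p)

/-- The relative Frobenius `S ⊗_{ψ, Frob_R} R → S`, `s ⊗ r ↦ s^p * ψ(r)`, as an additive
map on the tensor product of `S` (with its usual `R`-module structure) and `R` (with the
Frobenius-twisted `R`-module structure). -/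
noncomputable def relativeFrobenius (p : ℕ) [Fact p.Prime] (R S : Type*) [CommRing R]
    [CommRing S] [Algebra R S] [CharP R p] [CharP S p] :
    TensorProduct R S (FrobTwist p R) →+ S :=
  TensorProduct.liftAddHom
    (AddMonoidHom.mk'
      (fun s => AddMonoidHom.mk' (fun r : FrobTwist p R => s ^ p * algebraMap R S r.val)
        (fun r r' => by
          show s ^ p * algebraMap R S (r.val + r'.val) = _
          rw [map_add, mul_add]))
      (fun s t => by
        ext r
        show (s + t) ^ p * algebraMap R S r.val =
          s ^ p * algebraMap R S r.val + t ^ p * algebraMap R S r.val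
        haveI : ExpChar S p := ExpChar.prime Fact.out
        rw [add_pow_char, add_mul]))
    (fun a s r => by
      show (a • s) ^ p * algebraMap R S r.val =
        s ^ p * algebraMap R S (frobenius R p a * r.val)
      rw [Algebra.smul_def, mul_pow, ← map_pow, map_mul, frobenius_def]
      ring)

/-- The identity `R ≃+ FrobTwist p R` as an additive equivalence. -/
def FrobTwist.addEquiv (p : ℕ) (R : Type*) [CommRing R] : R ≃+ FrobTwist p R where
  toFun x := x
  invFun x := x
  left_inv _ := rfl
  right_inv _ := rfl
  map_add' _ _ := rfl

theorem relativeFrobenius_bijective_iff (p : ℕ) [Fact p.Prime] (R S : Type*)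
    [CommRing R] [CommRing S] [Algebra R S] [CharP R p] [CharP S p]
    {I : Type*} (t : I → S) (hli : LinearIndependent R t)
    (hgen : Submodule.span R (Set.range t) = ⊤) :
    Function.Bijective (relativeFrobenius p R S) ↔
      (LinearIndependent R (fun i => t i ^ p) ∧
        Submodule.span R (Set.range fun i => t i ^ p) = ⊤) := by
  classical
  haveI : DecidableEq I := Classical.decEq I
  let b : Module.Basis I R S := Module.Basis.mk hli hgen.ge
  let E : (I →₀ R) ≃+ TensorProduct R S (FrobTwist p R) :=
    (Finsupp.mapRange.addEquiv (FrobTwist.addEquiv p R)).trans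
      (((TensorProduct.finsuppScalarLeft R (FrobTwist p R) I).symm.toAddEquiv).trans
        ((TensorProduct.congr b.repr (LinearEquiv.refl R (FrobTwist p R))).symm.toAddEquiv))
  have hE : ⇑(relativeFrobenius p R S) ∘ ⇑E =
      ⇑(Finsupp.linearCombination R (fun i => t i ^ p)) := by
    have : (relativeFrobenius p R S).comp E.toAddMonoidHom =
        (Finsupp.linearCombination R (fun i => t i ^ p)).toAddMonoidHom := by
      apply Finsupp.addHom_ext
      intro i r
      have hE1 : E (Finsupp.single i r) = t i ⊗ₜ[R] (FrobTwist.addEquiv p R r) := by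
        show (TensorProduct.congr b.repr (LinearEquiv.refl R (FrobTwist p R))).symm
          ((TensorProduct.finsuppScalarLeft R (FrobTwist p R) I).symm
            (Finsupp.mapRange (FrobTwist.addEquiv p R) (map_zero _) (Finsupp.single i r))) = _
        rw [Finsupp.mapRange_single, TensorProduct.finsuppScalarLeft_symm_apply_single,
          TensorProduct.congr_symm_tmul, LinearEquiv.refl_symm, LinearEquiv.refl_apply,
          Module.Basis.repr_symm_single_one]
        congr 1
        exact Module.Basis.mk_apply hli hgen.ge i
      simp only [AddMonoidHom.coe_comp, AddEquiv.coe_toAddMonoidHom, Function.comp_apply,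
        LinearMap.toAddMonoidHom_coe, hE1]
      rw [relativeFrobenius, TensorProduct.liftAddHom_tmul]
      show t i ^ p * algebraMap R S r = _
      rw [Finsupp.linearCombination_single, Algebra.smul_def]
      ring
    exact funext fun x => DFunLike.congr_fun this x
  rw [← Function.Bijective.of_comp_iff _ E.bijective, hE,
    linearIndependent_iff_injective_finsuppLinearCombination]
  constructor
  · intro h
    refine ⟨h.injective, ?_⟩
    rw [← Finsupp.range_linearCombination, LinearMap.range_eq_top.mpr h.surjective]
  · rintro ⟨h1, h2⟩
    refine ⟨h1, LinearMap.range_eq_top.mp ?_⟩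
    rw [Finsupp.range_linearCombination, h2]

/-- for a commutative algebra `S` over a commutative ring `R` of
characteristic `p`, free as an `R`-module with basis `(s i)`, the following are
equivalent: (1) the relative Frobenius is an isomorphism (`S` is relatively perfect);
(2) for every `l`, the `p^l`-th powers of the `s i` form an `R`-basis of `S`;
(3) the `p`-th powers of the `s i` form an `R`-basis of `S`. -/
theorem characterise_relatively_perfect (p : ℕ) [Fact p.Prime] (R S : Type*)
    [CommRing R] [CommRing S] [Algebra R S] [CharP R p] [CharP S p]
    {I : Type*} (s : I → S) (hli : LinearIndependent R s)
    (hgen : Submodule.span R (Set.range s) = ⊤) :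
    List.TFAE
      [Function.Bijective (relativeFrobenius p R S),
       ∀ l : ℕ, LinearIndependent R (fun i => s i ^ p ^ l) ∧
         Submodule.span R (Set.range fun i => s i ^ p ^ l) = ⊤,
       LinearIndependent R (fun i => s i ^ p) ∧
         Submodule.span R (Set.range fun i => s i ^ p) = ⊤] := by
  tfae_have 1 ↔ 3 := relativeFrobenius_bijective_iff p R S s hli hgen
  tfae_have 3 → 2 := by
    intro h3 l
    induction l with
    | zero => simpa using ⟨hli, hgen⟩
    | succ l ih =>
      have hbij : Function.Bijective (relativeFrobenius p R S) :=
        (relativeFrobenius_bijective_iff p R S s hli hgen).mpr h3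
      have := (relativeFrobenius_bijective_iff p R S (fun i => s i ^ p ^ l)
        ih.1 ih.2).mp hbij
      have hpow : (fun i => (s i ^ p ^ l) ^ p) = fun i => s i ^ p ^ (l + 1) := by
        funext i
        rw [← pow_mul, ← pow_succ]
      rwa [hpow] at this
  tfae_have 2 → 3 := by
    intro h2
    simpa using h2 1
  tfae_finish
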